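/- Interval predictor inclusion (Theorem 1, part 1): let x solve ẋ = (A₀ + Σᵢ λᵢ(θ(t))ΔAᵢ)x + Bd(t) where A₀ is Metzler, λᵢ(θ(t)) ∈ [0,1] with Σᵢ λᵢ(θ(t)) = 1, and d̲(t) ≤ d(t) ≤ d̄(t). Let (x̲, x̄) solve ẋ̲ = A₀x̲ − ΔA₊x̲⁻ − ΔA₋x̄⁺ + B⁺d̲ − B⁻d̄ and x̄̇ = A₀x̄ + ΔA₊x̄⁺ + ΔA₋x̲⁻ + B⁺d̄ − B⁻d̲, with x̲(0) ≤ x(0) ≤ x̄(0). Then x̲(t) ≤ x(t) ≤ x̄(t) for all t ≥ 0. -/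

import Mathlib

open Matrix Set Filter

/-- A square matrix is Metzler if all its off-diagonal entries are nonnegative. -/
def Metzler {n : ℕ} (A : Matrix (Fin n) (Fin n) ℝ) : Prop :=
  ∀ i j, i ≠ j → 0 ≤ A i j

noncomputable def matPos {m n : ℕ} (A : Matrix (Fin m) (Fin n) ℝ) : Matrix (Fin m) (Fin n) ℝ :=
  fun i j => max (A i j) 0

noncomputable def matNeg {m n : ℕ} (A : Matrix (Fin m) (Fin n) ℝ) : Matrix (Fin m) (Fin n) ℝ :=
  matPos A - A

noncomputable def vecPos {n : ℕ} (x : Fin n → ℝ) : Fin n → ℝ := fun i => max (x i) 0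

noncomputable def vecNeg {n : ℕ} (x : Fin n → ℝ) : Fin n → ℝ := vecPos x - x

section Aux

lemma hasDerivAt_min_sq (s : ℝ) : HasDerivAt (fun r : ℝ => (min r 0)^2) (2 * min s 0) s := by
  rcases lt_trichotomy s 0 with hs | hs | hs
  · have h1 : HasDerivAt (fun r : ℝ => r^2) (2 * s) s := by
      simpa using (hasDerivAt_pow 2 s)
    have h2 : (fun r : ℝ => r ^ 2) =ᶠ[nhds s] fun r => (min r 0)^2 := by
      filter_upwards [Iio_mem_nhds hs] with r hr
      rw [min_eq_left (le_of_lt hr)]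
    rw [min_eq_left hs.le]
    exact h1.congr_of_eventuallyEq h2.symm
  · subst hs
    rw [hasDerivAt_iff_tendsto_slope]
    have key : ∀ z : ℝ, ‖slope (fun r : ℝ => (min r 0)^2) 0 z‖ ≤ |z| := by
      intro z
      rcases eq_or_ne z 0 with rfl | hz
      · simp [slope]
      rw [slope_def_field]
      have h1 : |min z 0| ≤ |z| := by
        rcases le_or_gt z 0 with h | h
        · rw [min_eq_left h]
        · rw [min_eq_right h.le]; simp
      have h2 : (min z 0)^2 ≤ z^2 := by
        rw [← sq_abs, ← sq_abs z]
        exact pow_le_pow_left₀ (abs_nonneg _) h1 2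
      calc ‖((min z 0)^2 - (min 0 0)^2) / (z - 0)‖ = (min z 0)^2 / |z| := by
            simp [abs_div, abs_of_nonneg (sq_nonneg (min z 0))]
        _ ≤ z^2 / |z| := by gcongr
        _ = |z| := by rw [← sq_abs z, sq, mul_div_assoc, div_self (abs_ne_zero.2 hz), mul_one]
    have hT : Tendsto (fun z : ℝ => |z|) (nhdsWithin 0 {0}ᶜ) (nhds 0) := by
      have h := (continuous_abs.tendsto (0:ℝ)).mono_left (nhdsWithin_le_nhds (s := {(0:ℝ)}ᶜ))
      simpa using h
    have hsq := squeeze_zero_norm (fun z => key z) hT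
    simpa using hsq
  · have h2 : (fun _ : ℝ => (0:ℝ)) =ᶠ[nhds s] fun r => (min r 0)^2 := by
      filter_upwards [Ioi_mem_nhds hs] with r hr
      rw [min_eq_right (le_of_lt hr)]; norm_num
    rw [min_eq_right hs.le]
    simpa using (hasDerivAt_const s (0:ℝ)).congr_of_eventuallyEq h2.symm

lemma core_nonneg {ι : Type*} [Fintype ι] (y g : ℝ → ι → ℝ) (c : ι → ℝ) (C : ℝ) (hC : 0 ≤ C)
    (hy : ∀ t ∈ Ici (0:ℝ), HasDerivWithinAt y (g t) (Ici 0) t)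
    (hg : ∀ t ∈ Ici (0:ℝ), ∀ i,
      c i * y t i - C * Real.sqrt (∑ j, (min (y t j) 0)^2) ≤ g t i)
    (hy0 : 0 ≤ y 0) : ∀ t ∈ Ici (0:ℝ), 0 ≤ y t := by
  classical
  set v : ℝ → ℝ := fun t => ∑ j, (min (y t j) 0)^2 with hv
  set K : ℝ := ∑ _i : ι, (2*|c _i| + 2*C) with hK
  have hv0 : ∀ t, 0 ≤ v t := fun t => Finset.sum_nonneg fun j _ => sq_nonneg _
  have hdv : ∀ t ∈ Ici (0:ℝ), HasDerivWithinAt v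
      (∑ i, 2 * min (y t i) 0 * g t i) (Ici 0) t := by
    intro t ht
    have hcomp : ∀ i, HasDerivWithinAt (fun s => y s i) (g t i) (Ici 0) t :=
      fun i => (hasDerivWithinAt_pi.1 (hy t ht)) i
    exact HasDerivWithinAt.fun_sum fun i _ =>
      by have := (hasDerivAt_min_sq (y t i)).comp_hasDerivWithinAt t (hcomp i); exact this
  have hbound : ∀ t ∈ Ici (0:ℝ), (∑ i, 2 * min (y t i) 0 * g t i) ≤ K * v t := by
    intro t ht
    rw [hK, Finset.sum_mul]
    apply Finset.sum_le_sum
    intro i _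
    have hmin : min (y t i) 0 ≤ 0 := min_le_right _ _
    have h1 : 2 * min (y t i) 0 * g t i
        ≤ 2 * min (y t i) 0 * (c i * y t i - C * Real.sqrt (v t)) := by
      have h2 : (2:ℝ) * min (y t i) 0 ≤ 0 := by linarith
      exact mul_le_mul_of_nonpos_left (hg t ht i) h2
    have hmy : min (y t i) 0 * y t i = (min (y t i) 0)^2 := by
      rcases le_or_gt (y t i) 0 with h | h
      · rw [min_eq_left h]; ring
      · rw [min_eq_right h.le]; ring
    have hsq : (min (y t i) 0)^2 ≤ v t :=
      Finset.single_le_sum (f := fun j => (min (y t j) 0)^2)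
        (fun j _ => sq_nonneg _) (Finset.mem_univ i)
    have hsqrt : -min (y t i) 0 ≤ Real.sqrt (v t) := by
      have h3 : |min (y t i) 0| ≤ Real.sqrt (v t) := by
        rw [← Real.sqrt_sq_eq_abs]; exact Real.sqrt_le_sqrt hsq
      have := neg_abs_le (min (y t i) 0)
      linarith
    have hvv : Real.sqrt (v t) * Real.sqrt (v t) = v t := Real.mul_self_sqrt (hv0 t)
    have hsnn : 0 ≤ Real.sqrt (v t) := Real.sqrt_nonneg _
    have habs1 : c i ≤ |c i| := le_abs_self _
    have habs2 : -|c i| ≤ c i := neg_abs_le _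
    nlinarith [sq_nonneg (min (y t i) 0), mul_le_mul_of_nonneg_left hsqrt hC,
      mul_le_mul_of_nonneg_right hsqrt hsnn]
  intro T hT
  have hcont : ContinuousOn v (Icc 0 T) := fun s hs =>
    ((hdv s hs.1).continuousWithinAt).mono Icc_subset_Ici_self
  have hslope : ∀ s ∈ Ico (0:ℝ) T, ∀ r,
      (∑ i, 2 * min (y s i) 0 * g s i) < r →
      ∃ᶠ z in nhdsWithin s (Ioi s), (z - s)⁻¹ * (v z - v s) < r := by
    intro s hs r hr
    exact ((hdv s hs.1).mono (Ici_subset_Ici.2 hs.1)).liminf_right_slope_le hr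
  have h0 : v 0 ≤ 0 := by
    have : ∀ j, min (y 0 j) 0 = 0 := fun j => min_eq_right (hy0 j)
    simp [hv, this]
  have hb : ∀ s ∈ Ico (0:ℝ) T, (∑ i, 2 * min (y s i) 0 * g s i) ≤ K * v s + 0 := by
    intro s hs; simpa using hbound s hs.1
  have hgron := le_gronwallBound_of_liminf_deriv_right_le hcont hslope h0 hb T
    (right_mem_Icc.2 hT)
  rw [gronwallBound_ε0_δ0] at hgron
  have hvT : v T = 0 := le_antisymm hgron (hv0 T)
  intro i
  have hterm : (min (y T i) 0)^2 = 0 :=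
    (Finset.sum_eq_zero_iff_of_nonneg
      (fun j (_ : j ∈ Finset.univ) => sq_nonneg (min (y T j) 0))).1 hvT i (Finset.mem_univ i)
  exact min_eq_right_iff.1 (sq_eq_zero_iff.1 hterm)

lemma matPos_nonneg {m n : ℕ} (A : Matrix (Fin m) (Fin n) ℝ) (i j) : 0 ≤ matPos A i j :=
  le_max_right _ _

lemma matNeg_nonneg {m n : ℕ} (A : Matrix (Fin m) (Fin n) ℝ) (i j) : 0 ≤ matNeg A i j := by
  simp only [matNeg, Matrix.sub_apply, matPos, sub_nonneg]
  exact le_max_left _ _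

lemma matPos_sub_matNeg {m n : ℕ} (A : Matrix (Fin m) (Fin n) ℝ) :
    matPos A - matNeg A = A := by
  ext i j; simp [matNeg]

lemma matPos_neg {m n : ℕ} (A : Matrix (Fin m) (Fin n) ℝ) : matPos (-A) = matNeg A := by
  ext i j
  simp only [matPos, matNeg, Matrix.neg_apply, Matrix.sub_apply]
  rcases le_total (A i j) 0 with h | h
  · rw [max_eq_left (by linarith), max_eq_right h]; ring
  · rw [max_eq_right (by linarith), max_eq_left h]; ring

lemma matNeg_neg {m n : ℕ} (A : Matrix (Fin m) (Fin n) ℝ) : matNeg (-A) = matPos A := by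
  have := matPos_neg (-A); rw [neg_neg] at this; exact this.symm

lemma vecNeg_nonneg {n : ℕ} (u : Fin n → ℝ) : 0 ≤ vecNeg u := by
  intro j
  have h : u j ≤ max (u j) 0 := le_max_left _ _
  show (0:ℝ) ≤ max (u j) 0 - u j
  linarith

lemma vecPos_nonneg {n : ℕ} (u : Fin n → ℝ) : 0 ≤ vecPos u := fun j => le_max_right _ _

lemma mulVec_mono {m n : ℕ} {A : Matrix (Fin m) (Fin n) ℝ} (hA : ∀ i j, 0 ≤ A i j)
    {u v : Fin n → ℝ} (h : u ≤ v) : A.mulVec u ≤ A.mulVec v := by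
  intro i
  simp only [Matrix.mulVec, dotProduct]
  exact Finset.sum_le_sum fun j _ => mul_le_mul_of_nonneg_left (h j) (hA i j)

lemma mulVec_nonneg {m n : ℕ} {A : Matrix (Fin m) (Fin n) ℝ} (hA : ∀ i j, 0 ≤ A i j)
    {u : Fin n → ℝ} (h : 0 ≤ u) : 0 ≤ A.mulVec u := by
  have := mulVec_mono hA h
  rwa [Matrix.mulVec_zero] at this

lemma sum_mulVec {N m n : ℕ} (A : Fin N → Matrix (Fin m) (Fin n) ℝ) (v : Fin n → ℝ) :
    (∑ k, A k).mulVec v = ∑ k, (A k).mulVec v := by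
  ext i
  simp only [Matrix.mulVec, dotProduct, Matrix.sum_apply, Finset.sum_apply,
    Finset.sum_mul]
  exact Finset.sum_comm

lemma sum_smul_mulVec {N m n : ℕ} (lam : Fin N → ℝ) (A : Fin N → Matrix (Fin m) (Fin n) ℝ)
    (v : Fin n → ℝ) (i : Fin m) :
    ((∑ k, lam k • A k).mulVec v) i = ∑ k, lam k * ((A k).mulVec v) i := by
  rw [sum_mulVec (fun k => lam k • A k)]
  simp only [Finset.sum_apply]
  congr 1
  ext k
  rw [Matrix.smul_mulVec]
  simp

/-- The key per-component quasimonotonicity estimate. -/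
lemma keyS {n N : ℕ} (M : Fin N → Matrix (Fin n) (Fin n) ℝ) (lam : Fin N → ℝ)
    (hlam0 : ∀ k, 0 ≤ lam k) (hlam1 : ∀ k, lam k ≤ 1)
    (a p q w z : Fin n → ℝ) (hp : 0 ≤ p) (hq : 0 ≤ q) (hw : 0 ≤ w) (hz : 0 ≤ z)
    (hpw : ∀ j, -(w j) ≤ a j + p j) (hqz : ∀ j, -(z j) ≤ q j - a j) (i : Fin n) :
    -(((∑ k, matPos (M k)).mulVec w) i + ((∑ k, matNeg (M k)).mulVec z) i)
      ≤ (∑ k, lam k * ((M k).mulVec a) i)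
        + ((∑ k, matPos (M k)).mulVec p) i + ((∑ k, matNeg (M k)).mulVec q) i := by
  rw [sum_mulVec, sum_mulVec, sum_mulVec, sum_mulVec]
  simp only [Finset.sum_apply, ← Finset.sum_add_distrib, ← Finset.sum_neg_distrib]
  apply Finset.sum_le_sum
  intro k _
  set Pk := matPos (M k)
  set Qk := matNeg (M k)
  have hPk : ∀ i j, 0 ≤ Pk i j := matPos_nonneg _
  have hQk : ∀ i j, 0 ≤ Qk i j := matNeg_nonneg _
  have hPp : 0 ≤ (Pk.mulVec p) i := mulVec_nonneg hPk hp i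
  have hQq : 0 ≤ (Qk.mulVec q) i := mulVec_nonneg hQk hq i
  have hPw : 0 ≤ (Pk.mulVec w) i := mulVec_nonneg hPk hw i
  have hQz : 0 ≤ (Qk.mulVec z) i := mulVec_nonneg hQk hz i
  have hsplit : ((M k).mulVec a) i = (Pk.mulVec a) i - (Qk.mulVec a) i := by
    conv_lhs => rw [← matPos_sub_matNeg (M k)]
    rw [Matrix.sub_mulVec]; rfl
  have h1 : -(Pk.mulVec w) i ≤ (Pk.mulVec a) i + (Pk.mulVec p) i := by
    have h := mulVec_mono hPk (u := -w) (v := a + p) (fun j => hpw j) i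
    rw [Matrix.mulVec_neg, Matrix.mulVec_add] at h
    simpa using h
  have h2 : -(Qk.mulVec z) i ≤ (Qk.mulVec q) i - (Qk.mulVec a) i := by
    have h := mulVec_mono hQk (u := -z) (v := q - a) (fun j => hqz j) i
    rw [Matrix.mulVec_neg, Matrix.mulVec_sub] at h
    simpa using h
  have hl0 := hlam0 k
  have hl1 := hlam1 k
  nlinarith [mul_le_mul_of_nonneg_left h1 hl0, mul_le_mul_of_nonneg_left h2 hl0,
    mul_le_mul_of_nonneg_right hl1 hPw, mul_le_mul_of_nonneg_right hl1 hQz,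
    mul_le_mul_of_nonneg_right hl1 hPp, mul_le_mul_of_nonneg_right hl1 hQq]

/-- Metzler diagonal-splitting bound. -/
lemma metzler_bound {n : ℕ} {A : Matrix (Fin n) (Fin n) ℝ} (hA : Metzler A)
    (u w : Fin n → ℝ) (hw : 0 ≤ w) (huw : ∀ j, -(w j) ≤ u j) (i : Fin n) :
    A i i * u i - ∑ j, |A i j| * w j ≤ (A.mulVec u) i := by
  have hexp : (A.mulVec u) i = A i i * u i + ∑ j ∈ Finset.univ.erase i, A i j * u j := by
    simp only [Matrix.mulVec, dotProduct]
    rw [← Finset.add_sum_erase _ _ (Finset.mem_univ i)]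
  rw [hexp]
  have h1 : ∑ j ∈ Finset.univ.erase i, -(|A i j| * w j)
      ≤ ∑ j ∈ Finset.univ.erase i, A i j * u j := by
    apply Finset.sum_le_sum
    intro j hj
    have hAij : 0 ≤ A i j := hA i j (Ne.symm (Finset.ne_of_mem_erase hj))
    have : A i j * (-(w j)) ≤ A i j * u j := mul_le_mul_of_nonneg_left (huw j) hAij
    rw [abs_of_nonneg hAij]
    nlinarith
  have h2 : ∑ j, -(|A i j| * w j) ≤ ∑ j ∈ Finset.univ.erase i, -(|A i j| * w j) := by
    have h3 : ∑ j ∈ Finset.univ.erase i, |A i j| * w j ≤ ∑ j, |A i j| * w j := by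
      apply Finset.sum_le_sum_of_subset_of_nonneg (Finset.erase_subset _ _)
      intro j _ _
      exact mul_nonneg (abs_nonneg _) (hw j)
    simp only [Finset.sum_neg_distrib]
    linarith
  have := le_trans h2 h1
  rw [Finset.sum_neg_distrib] at this
  linarith

end Aux

theorem stmt14 {n m N : ℕ} (A₀ : Matrix (Fin n) (Fin n) ℝ)
    (ΔA : Fin N → Matrix (Fin n) (Fin n) ℝ) (B : Matrix (Fin n) (Fin m) ℝ)
    (lam : ℝ → Fin N → ℝ) (d dl du : ℝ → Fin m → ℝ) (x xl xu : ℝ → Fin n → ℝ)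
    (hA₀ : Metzler A₀)
    (hlam : ∀ t ∈ Ici (0 : ℝ), ∀ i, lam t i ∈ Icc (0 : ℝ) 1)
    (hsum : ∀ t ∈ Ici (0 : ℝ), ∑ i, lam t i = 1)
    (hd : ∀ t ∈ Ici (0 : ℝ), dl t ≤ d t ∧ d t ≤ du t)
    (hx : ∀ t ∈ Ici (0 : ℝ),
      HasDerivWithinAt x ((A₀ + ∑ i, lam t i • ΔA i).mulVec (x t) + B.mulVec (d t)) (Ici 0) t)
    (hxl : ∀ t ∈ Ici (0 : ℝ),
      HasDerivWithinAt xl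
        (A₀.mulVec (xl t) - (∑ i, matPos (ΔA i)).mulVec (vecNeg (xl t))
          - (∑ i, matNeg (ΔA i)).mulVec (vecPos (xu t))
          + (matPos B).mulVec (dl t) - (matNeg B).mulVec (du t)) (Ici 0) t)
    (hxu : ∀ t ∈ Ici (0 : ℝ),
      HasDerivWithinAt xu
        (A₀.mulVec (xu t) + (∑ i, matPos (ΔA i)).mulVec (vecPos (xu t))
          + (∑ i, matNeg (ΔA i)).mulVec (vecNeg (xl t))
          + (matPos B).mulVec (du t) - (matNeg B).mulVec (dl t)) (Ici 0) t)
    (h0 : xl 0 ≤ x 0 ∧ x 0 ≤ xu 0) :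
    ∀ t ∈ Ici (0 : ℝ), xl t ≤ x t ∧ x t ≤ xu t := by
  classical
  set P : Matrix (Fin n) (Fin n) ℝ := ∑ k, matPos (ΔA k) with hPdef
  set Q : Matrix (Fin n) (Fin n) ℝ := ∑ k, matNeg (ΔA k) with hQdef
  have hP : ∀ i j, 0 ≤ P i j := by
    intro i j
    rw [hPdef]
    simp only [Matrix.sum_apply]
    exact Finset.sum_nonneg fun k _ => matPos_nonneg _ i j
  have hQ : ∀ i j, 0 ≤ Q i j := by
    intro i j
    rw [hQdef]
    simp only [Matrix.sum_apply]
    exact Finset.sum_nonneg fun k _ => matNeg_nonneg _ i j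
  set C : ℝ := ∑ i, ∑ j, (|A₀ i j| + P i j + Q i j) with hCdef
  have hrow : ∀ i, ∑ j, (|A₀ i j| + P i j + Q i j) ≤ C := by
    intro i
    rw [hCdef]
    apply Finset.single_le_sum (f := fun i => ∑ j, (|A₀ i j| + P i j + Q i j))
      (fun i' _ => Finset.sum_nonneg fun j _ =>
        add_nonneg (add_nonneg (abs_nonneg _) (hP i' j)) (hQ i' j)) (Finset.mem_univ i)
  have hC0 : 0 ≤ C := by
    rw [hCdef]
    apply Finset.sum_nonneg fun i _ => Finset.sum_nonneg fun j _ =>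
      add_nonneg (add_nonneg (abs_nonneg _) (hP i j)) (hQ i j)
  -- the error dynamics
  set fe : ℝ → Fin n → ℝ := fun t =>
    ((A₀ + ∑ i, lam t i • ΔA i).mulVec (x t) + B.mulVec (d t)) -
      (A₀.mulVec (xl t) - P.mulVec (vecNeg (xl t)) - Q.mulVec (vecPos (xu t))
        + (matPos B).mulVec (dl t) - (matNeg B).mulVec (du t)) with hfedef
  set fb : ℝ → Fin n → ℝ := fun t =>
    (A₀.mulVec (xu t) + P.mulVec (vecPos (xu t)) + Q.mulVec (vecNeg (xl t))
        + (matPos B).mulVec (du t) - (matNeg B).mulVec (dl t)) -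
      ((A₀ + ∑ i, lam t i • ΔA i).mulVec (x t) + B.mulVec (d t)) with hfbdef
  set y : ℝ → (Fin n ⊕ Fin n) → ℝ := fun t => Sum.elim (x t - xl t) (xu t - x t) with hydef
  set g : ℝ → (Fin n ⊕ Fin n) → ℝ := fun t => Sum.elim (fe t) (fb t) with hgdef
  set c : (Fin n ⊕ Fin n) → ℝ := Sum.elim (fun i => A₀ i i) (fun i => A₀ i i) with hcdef
  have hy : ∀ t ∈ Ici (0:ℝ), HasDerivWithinAt y (g t) (Ici 0) t := by
    intro t ht
    apply hasDerivWithinAt_pi.2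
    rintro (i | i)
    · exact (hasDerivWithinAt_pi.1 ((hx t ht).sub (hxl t ht))) i
    · exact (hasDerivWithinAt_pi.1 ((hxu t ht).sub (hx t ht))) i
  have hy0 : 0 ≤ y 0 := by
    rintro (i | i)
    · simpa [hydef, sub_nonneg] using h0.1 i
    · simpa [hydef, sub_nonneg] using h0.2 i
  -- key derivative estimate
  have hg : ∀ t ∈ Ici (0:ℝ), ∀ i,
      c i * y t i - C * Real.sqrt (∑ j, (min (y t j) 0)^2) ≤ g t i := by
    intro t ht
    set e : Fin n → ℝ := x t - xl t with hedef
    set b : Fin n → ℝ := xu t - x t with hbdef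
    set w : Fin n → ℝ := fun j => -(min (e j) 0) with hwdef
    set z : Fin n → ℝ := fun j => -(min (b j) 0) with hzdef
    set s : ℝ := Real.sqrt (∑ j, (min (y t j) 0)^2) with hsdef
    have hw0 : 0 ≤ w := fun j => neg_nonneg.2 (min_le_right _ _)
    have hz0 : 0 ≤ z := fun j => neg_nonneg.2 (min_le_right _ _)
    have hwe : ∀ j, -(w j) ≤ e j := fun j => by
      simp only [hwdef, neg_neg]; exact min_le_left _ _
    have hzb : ∀ j, -(z j) ≤ b j := fun j => by
      simp only [hzdef, neg_neg]; exact min_le_left _ _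
    have hs0 : 0 ≤ s := Real.sqrt_nonneg _
    have hsumsplit : (∑ j : Fin n ⊕ Fin n, (min (y t j) 0)^2)
        = (∑ j, (min (e j) 0)^2) + ∑ j, (min (b j) 0)^2 := by
      rw [Fintype.sum_sum_type]
      rfl
    have hws : ∀ j, w j ≤ s := by
      intro j
      have h1 : (w j)^2 ≤ ∑ j' : Fin n ⊕ Fin n, (min (y t j') 0)^2 := by
        rw [hsumsplit]
        have h2 : (w j)^2 = (min (e j) 0)^2 := by rw [hwdef]; ring
        have h3 : (min (e j) 0)^2 ≤ ∑ j', (min (e j') 0)^2 :=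
          Finset.single_le_sum (f := fun j' => (min (e j') 0)^2)
            (fun j' _ => sq_nonneg _) (Finset.mem_univ j)
        have h4 : (0:ℝ) ≤ ∑ j', (min (b j') 0)^2 :=
          Finset.sum_nonneg fun j' _ => sq_nonneg _
        linarith
      calc w j = Real.sqrt ((w j)^2) := (Real.sqrt_sq (hw0 j)).symm
        _ ≤ s := Real.sqrt_le_sqrt h1
    have hzs : ∀ j, z j ≤ s := by
      intro j
      have h1 : (z j)^2 ≤ ∑ j' : Fin n ⊕ Fin n, (min (y t j') 0)^2 := by
        rw [hsumsplit]
        have h2 : (z j)^2 = (min (b j) 0)^2 := by rw [hzdef]; ring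
        have h3 : (min (b j) 0)^2 ≤ ∑ j', (min (b j') 0)^2 :=
          Finset.single_le_sum (f := fun j' => (min (b j') 0)^2)
            (fun j' _ => sq_nonneg _) (Finset.mem_univ j)
        have h4 : (0:ℝ) ≤ ∑ j', (min (e j') 0)^2 :=
          Finset.sum_nonneg fun j' _ => sq_nonneg _
        linarith
      calc z j = Real.sqrt ((z j)^2) := (Real.sqrt_sq (hz0 j)).symm
        _ ≤ s := Real.sqrt_le_sqrt h1
    -- common final bound
    have hfinal : ∀ i, (∑ j, |A₀ i j| * w j) + ((P.mulVec w) i + (Q.mulVec z) i) ≤ C * s ∧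
        (∑ j, |A₀ i j| * z j) + ((Q.mulVec w) i + (P.mulVec z) i) ≤ C * s := by
      intro i
      have hPw : (P.mulVec w) i = ∑ j, P i j * w j := rfl
      have hQz : (Q.mulVec z) i = ∑ j, Q i j * z j := rfl
      have hQw : (Q.mulVec w) i = ∑ j, Q i j * w j := rfl
      have hPz : (P.mulVec z) i = ∑ j, P i j * z j := rfl
      constructor
      · rw [hPw, hQz, ← Finset.sum_add_distrib, ← Finset.sum_add_distrib]
        calc (∑ j, (|A₀ i j| * w j + (P i j * w j + Q i j * z j)))
            ≤ ∑ j, (|A₀ i j| + P i j + Q i j) * s := by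
              apply Finset.sum_le_sum
              intro j _
              have := hws j; have := hzs j
              have h1 : |A₀ i j| * w j ≤ |A₀ i j| * s :=
                mul_le_mul_of_nonneg_left (hws j) (abs_nonneg _)
              have h2 : P i j * w j ≤ P i j * s :=
                mul_le_mul_of_nonneg_left (hws j) (hP i j)
              have h3 : Q i j * z j ≤ Q i j * s :=
                mul_le_mul_of_nonneg_left (hzs j) (hQ i j)
              nlinarith
          _ = (∑ j, (|A₀ i j| + P i j + Q i j)) * s := by rw [Finset.sum_mul]
          _ ≤ C * s := mul_le_mul_of_nonneg_right (hrow i) hs0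
      · rw [hQw, hPz, ← Finset.sum_add_distrib, ← Finset.sum_add_distrib]
        calc (∑ j, (|A₀ i j| * z j + (Q i j * w j + P i j * z j)))
            ≤ ∑ j, (|A₀ i j| + P i j + Q i j) * s := by
              apply Finset.sum_le_sum
              intro j _
              have h1 : |A₀ i j| * z j ≤ |A₀ i j| * s :=
                mul_le_mul_of_nonneg_left (hzs j) (abs_nonneg _)
              have h2 : Q i j * w j ≤ Q i j * s :=
                mul_le_mul_of_nonneg_left (hws j) (hQ i j)
              have h3 : P i j * z j ≤ P i j * s :=
                mul_le_mul_of_nonneg_left (hzs j) (hP i j)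
              nlinarith
          _ = (∑ j, (|A₀ i j| + P i j + Q i j)) * s := by rw [Finset.sum_mul]
          _ ≤ C * s := mul_le_mul_of_nonneg_right (hrow i) hs0
    have hlam0 : ∀ k, 0 ≤ lam t k := fun k => (hlam t ht k).1
    have hlam1 : ∀ k, lam t k ≤ 1 := fun k => (hlam t ht k).2
    have hpw : ∀ j, -(w j) ≤ x t j + vecNeg (xl t) j := by
      intro j
      have h1 : -(xl t j) ≤ vecNeg (xl t) j := by
        simp only [vecNeg, vecPos, Pi.sub_apply]
        have := le_max_right (xl t j) 0
        linarith
      have := hwe j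
      simp only [hedef, Pi.sub_apply] at this
      linarith
    have hqz : ∀ j, -(z j) ≤ vecPos (xu t) j - x t j := by
      intro j
      have h1 : xu t j ≤ vecPos (xu t) j := le_max_left _ _
      have := hzb j
      simp only [hbdef, Pi.sub_apply] at this
      linarith
    rintro (i | i)
    · -- lower-bound for fe
      show A₀ i i * e i - C * s ≤ fe t i
      -- decompose fe t i
      have hsplit : fe t i = ((A₀.mulVec e) i)
          + ((∑ k, lam t k * ((ΔA k).mulVec (x t)) i)
            + (P.mulVec (vecNeg (xl t))) i + (Q.mulVec (vecPos (xu t))) i)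
          + (((matPos B).mulVec (d t - dl t)) i + ((matNeg B).mulVec (du t - d t)) i) := by
        rw [hfedef]
        have hBd : B.mulVec (d t) = (matPos B).mulVec (d t) - (matNeg B).mulVec (d t) := by
          conv_lhs => rw [← matPos_sub_matNeg B]
          rw [Matrix.sub_mulVec]
        simp only [Pi.sub_apply, Pi.add_apply, Matrix.add_mulVec, hBd,
          Matrix.mulVec_sub, hedef, sum_smul_mulVec]
        ring
      rw [hsplit]
      have hT1 : A₀ i i * e i - ∑ j, |A₀ i j| * w j ≤ (A₀.mulVec e) i :=
        metzler_bound hA₀ e w hw0 hwe i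
      have hT2 := keyS ΔA (lam t) hlam0 hlam1 (x t) (vecNeg (xl t)) (vecPos (xu t)) w z
        (vecNeg_nonneg _) (vecPos_nonneg _) hw0 hz0 hpw hqz i
      rw [← hPdef, ← hQdef] at hT2
      have hT3 : 0 ≤ ((matPos B).mulVec (d t - dl t)) i + ((matNeg B).mulVec (du t - d t)) i := by
        have h1 : 0 ≤ (matPos B).mulVec (d t - dl t) :=
          mulVec_nonneg (matPos_nonneg B) (by simpa [sub_nonneg] using (hd t ht).1)
        have h2 : 0 ≤ (matNeg B).mulVec (du t - d t) :=
          mulVec_nonneg (matNeg_nonneg B) (by simpa [sub_nonneg] using (hd t ht).2)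
        exact add_nonneg (h1 i) (h2 i)
      have := (hfinal i).1
      linarith
    · -- lower-bound for fb
      show A₀ i i * b i - C * s ≤ fb t i
      have hsplit : fb t i = ((A₀.mulVec b) i)
          + ((∑ k, lam t k * (((-(ΔA k)).mulVec (x t)) i))
            + (Q.mulVec (vecNeg (xl t))) i + (P.mulVec (vecPos (xu t))) i)
          + (((matPos B).mulVec (du t - d t)) i + ((matNeg B).mulVec (d t - dl t)) i) := by
        rw [hfbdef]
        have hBd : B.mulVec (d t) = (matPos B).mulVec (d t) - (matNeg B).mulVec (d t) := by
          conv_lhs => rw [← matPos_sub_matNeg B]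
          rw [Matrix.sub_mulVec]
        have hneg : ∀ k, ((-(ΔA k)).mulVec (x t)) i = -(((ΔA k).mulVec (x t)) i) := by
          intro k
          rw [Matrix.neg_mulVec]
          rfl
        simp only [Pi.sub_apply, Pi.add_apply, Matrix.add_mulVec, hBd,
          Matrix.mulVec_sub, hbdef, sum_smul_mulVec, hneg, Finset.sum_neg_distrib,
          mul_neg, Finset.sum_apply]
        ring
      rw [hsplit]
      have hT1 : A₀ i i * b i - ∑ j, |A₀ i j| * z j ≤ (A₀.mulVec b) i :=
        metzler_bound hA₀ b z hz0 hzb i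
      have hT2 := keyS (fun k => -(ΔA k)) (lam t) hlam0 hlam1 (x t)
        (vecNeg (xl t)) (vecPos (xu t)) w z
        (vecNeg_nonneg _) (vecPos_nonneg _) hw0 hz0 hpw hqz i
      simp only [matPos_neg, matNeg_neg] at hT2
      rw [← hPdef, ← hQdef] at hT2
      have hT3 : 0 ≤ ((matPos B).mulVec (du t - d t)) i + ((matNeg B).mulVec (d t - dl t)) i := by
        have h1 : 0 ≤ (matPos B).mulVec (du t - d t) :=
          mulVec_nonneg (matPos_nonneg B) (by simpa [sub_nonneg] using (hd t ht).2)
        have h2 : 0 ≤ (matNeg B).mulVec (d t - dl t) :=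
          mulVec_nonneg (matNeg_nonneg B) (by simpa [sub_nonneg] using (hd t ht).1)
        exact add_nonneg (h1 i) (h2 i)
      have := (hfinal i).2
      linarith
  have hmain := core_nonneg y g c C hC0 hy hg hy0
  intro t ht
  constructor
  · intro i
    have := hmain t ht (Sum.inl i)
    simp only [hydef, Sum.elim_inl, Pi.sub_apply, Pi.zero_apply] at this
    linarith
  · intro i
    have := hmain t ht (Sum.inr i)
    simp only [hydef, Sum.elim_inr, Pi.sub_apply, Pi.zero_apply] at this
    linarith
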